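/- Let C be an odd cycle properly colored with colors 1,…,n arranged so that every edge of C joins colors i and i+1 (indices mod n), with n ≥ 3 odd. Then for each pair of cyclically consecutive colors (i, i+1), the number of edges of C between color classes i and i+1 is odd. -/

import Mathlib

open Fin.NatCast in
lemma two_ne {n : ℕ} (hn : 3 ≤ n) [NeZero n] : (2 : Fin n) ≠ 0 := by
  intro h
  have h2 : ((2:ℕ) : Fin n) = 0 := by push_cast; exact h
  rw [Fin.natCast_eq_zero] at h2
  have := Nat.le_of_dvd (by norm_num) h2
  omega

open Fin.NatCast in
lemma one_ne {n : ℕ} (hn : 3 ≤ n) [NeZero n] : (1 : Fin n) ≠ 0 := by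
  intro h
  have h2 : ((1:ℕ) : Fin n) = 0 := by push_cast; exact h
  rw [Fin.natCast_eq_zero] at h2
  have := Nat.le_of_dvd (by norm_num) h2
  omega

section lists
variable {n : ℕ} [NeZero n]

/-- boundary predicate -/
def Bnd (i : Fin n) (q : Fin n × Fin n) : Prop :=
  (q.1 = i ∧ q.2 = i + 1) ∨ (q.2 = i ∧ q.1 = i + 1)

instance (i : Fin n) : DecidablePred (Bnd i) := fun _ => by unfold Bnd; infer_instance

def cnt (i : Fin n) (s : List (Fin n × Fin n)) : ℕ := s.countP (fun q => decide (Bnd i q))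

open Fin.NatCast in
lemma bnd_up (hn : 3 ≤ n) (a i : Fin n) : Bnd i (a, a + 1) ↔ a = i := by
  unfold Bnd
  constructor
  · rintro (⟨h1, _⟩ | ⟨h1, h2⟩)
    · exact h1
    · exfalso
      apply two_ne hn
      simp only [] at h1 h2
      have : a = a + 1 + 1 := by nth_rewrite 1 [h2]; rw [h1]
      rw [add_assoc] at this
      have := (left_eq_add).mp this
      convert this using 1
      norm_num
  · rintro rfl; exact Or.inl ⟨rfl, rfl⟩

open Fin.NatCast in
lemma bnd_down (hn : 3 ≤ n) (b i : Fin n) : Bnd i (b + 1, b) ↔ b = i := by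
  unfold Bnd
  constructor
  · rintro (⟨h1, h2⟩ | ⟨h1, _⟩)
    · exfalso
      apply two_ne hn
      simp only [] at h1 h2
      have : b = b + 1 + 1 := by nth_rewrite 1 [h1]; rw [h2]
      rw [add_assoc] at this
      have := (left_eq_add).mp this
      convert this using 1
      norm_num
    · exact h1
  · rintro rfl; exact Or.inr ⟨rfl, rfl⟩

lemma count_add (hn : 3 ≤ n) (i : Fin n) (s : List (Fin n × Fin n))
    (hstep : ∀ q ∈ s, q.2 = q.1 + 1 ∨ q.1 = q.2 + 1) :
    cnt i s + cnt (i + 1) s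
      = s.countP (fun q => decide (q.1 = i + 1)) + s.countP (fun q => decide (q.2 = i + 1)) := by
  induction s with
  | nil => simp [cnt]
  | cons q s ih =>
    have hq := hstep q (List.mem_cons_self)
    have ihs := ih (fun r hr => hstep r (List.mem_cons_of_mem q hr))
    simp only [cnt, List.countP_cons] at *
    rcases hq with hq | hq
    · obtain ⟨a, b⟩ := q
      simp only [] at hq
      subst hq
      simp only [decide_eq_true_eq, bnd_up hn]
      by_cases h1 : a = i <;> by_cases h2 : a = i + 1 <;>
        simp [h1, h2] <;> omega
    · obtain ⟨a, b⟩ := q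
      simp only [] at hq
      subst hq
      simp only [decide_eq_true_eq, bnd_down hn]
      have hne : b + 1 ≠ b := by
        intro h
        exact one_ne hn ((left_eq_add).mp h.symm)
      by_cases h1 : b = i <;> by_cases h2 : b = i + 1 <;>
        simp [h1, h2] <;> omega

lemma sum_cnt (hn : 3 ≤ n) (s : List (Fin n × Fin n))
    (hstep : ∀ q ∈ s, q.2 = q.1 + 1 ∨ q.1 = q.2 + 1) :
    ∑ i : Fin n, cnt i s = s.length := by
  induction s with
  | nil => simp [cnt]
  | cons q s ih =>
    have hq := hstep q (List.mem_cons_self)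
    have ihs := ih (fun r hr => hstep r (List.mem_cons_of_mem q hr))
    simp only [cnt, List.countP_cons, decide_eq_true_eq] at *
    rw [Finset.sum_add_distrib, ihs, List.length_cons]
    congr 1
    rcases hq with hq | hq
    · obtain ⟨a, b⟩ := q
      simp only [] at hq
      subst hq
      simp only [bnd_up hn]
      rw [Finset.sum_ite_eq Finset.univ a (fun _ => 1)]
      simp
    · obtain ⟨a, b⟩ := q
      simp only [] at hq
      subst hq
      simp only [bnd_down hn]
      rw [Finset.sum_ite_eq Finset.univ b (fun _ => 1)]
      simp

lemma cast_eq_one_iff_odd (k : ℕ) : (k : ZMod 2) = 1 ↔ Odd k := by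
  rw [Nat.odd_iff]
  rcases Nat.mod_two_eq_zero_or_one k with h | h <;>
    rw [← ZMod.natCast_mod k 2, h] <;> simp

open Fin.NatCast in
lemma steps_main (hn : 3 ≤ n) (hnodd : Odd n) (s : List (Fin n × Fin n))
    (hstep : ∀ q ∈ s, q.2 = q.1 + 1 ∨ q.1 = q.2 + 1)
    (hbal : ∀ x : Fin n, s.countP (fun q => decide (q.1 = x)) = s.countP (fun q => decide (q.2 = x)))
    (hlen : Odd s.length) (i : Fin n) : Odd (cnt i s) := by
  set g : Fin n → ZMod 2 := fun j => ((cnt j s : ℕ) : ZMod 2) with hg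
  have hstepg : ∀ j : Fin n, g (j + 1) = g j := by
    intro j
    have h := count_add hn j s hstep
    have h0 : ((cnt j s : ℕ) : ZMod 2) + ((cnt (j + 1) s : ℕ) : ZMod 2) = 0 := by
      have : ((cnt j s + cnt (j + 1) s : ℕ) : ZMod 2) = 0 := by
        rw [h, hbal (j + 1)]
        push_cast
        ring_nf
        rw [mul_two]
        exact CharTwo.add_self_eq_zero _
      rw [← Nat.cast_add]
      exact this
    have := eq_neg_of_add_eq_zero_left h0
    rw [CharTwo.neg_eq] at this
    simpa [hg] using this.symm
  have hall : ∀ j : Fin n, g j = g 0 := by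
    have key : ∀ m : ℕ, g ((m : Fin n)) = g 0 := by
      intro m
      induction m with
      | zero => norm_num
      | succ k ih =>
        have hc : ((k + 1 : ℕ) : Fin n) = ((k : ℕ) : Fin n) + 1 := by push_cast; ring
        rw [hc, hstepg, ih]
    intro j
    have := key j.val
    rwa [Fin.cast_val_eq_self] at this
  have hsum : (∑ j : Fin n, g j) = (s.length : ZMod 2) := by
    rw [← sum_cnt hn s hstep]
    push_cast
    rfl
  have hsum2 : (∑ j : Fin n, g j) = (n : ZMod 2) * g 0 := by
    rw [Finset.sum_congr rfl (fun j _ => hall j), Finset.sum_const, Finset.card_univ,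
      Fintype.card_fin, nsmul_eq_mul]
  have hn1 : (n : ZMod 2) = 1 := (cast_eq_one_iff_odd n).mpr hnodd
  have hl1 : (s.length : ZMod 2) = 1 := (cast_eq_one_iff_odd _).mpr hlen
  have hg0 : g 0 = 1 := by
    rw [hsum2, hn1, one_mul] at hsum
    rw [hsum, hl1]
  have : g i = 1 := by rw [hall i, hg0]
  exact (cast_eq_one_iff_odd _).mp this
end lists

lemma closed_bal {α : Type*} (P : α → Bool) (l : List α) (hne : l ≠ [])
    (hcl : l.head hne = l.getLast hne) :
    l.dropLast.countP P = l.tail.countP P := by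
  have e1 : l.countP P = l.dropLast.countP P + (if P (l.getLast hne) then 1 else 0) := by
    conv_lhs => rw [← List.dropLast_append_getLast hne]
    rw [List.countP_append]
    simp [List.countP_cons]
  have e2 : l.countP P = (if P (l.head hne) then 1 else 0) + l.tail.countP P := by
    conv_lhs => rw [← List.cons_head_tail hne]
    rw [List.countP_cons]
    omega
  rw [hcl] at e2
  omega

lemma map_fst_zip_tail {α : Type*} (l : List α) :
    (l.zip l.tail).map Prod.fst = l.dropLast := by
  induction l with
  | nil => simp
  | cons a l ih =>
    cases l with
    | nil => simp
    | cons b t => simpa using ih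

lemma map_snd_zip_tail {α : Type*} (l : List α) :
    (l.zip l.tail).map Prod.snd = l.tail := by
  apply List.map_snd_zip
  cases l <;> simp

lemma edges_eq_zip {V : Type*} {G : SimpleGraph V} {u v : V} (p : G.Walk u v) :
    p.edges = (p.support.zip p.support.tail).map (fun q => s(q.1, q.2)) := by
  induction p with
  | nil => simp
  | @cons a b c h q ih =>
    rw [SimpleGraph.Walk.edges_cons, SimpleGraph.Walk.support_cons, ih]
    conv_rhs => rw [List.tail_cons, q.support_eq_cons, List.zip_cons_cons]
    rw [List.map_cons]
    congr 1
    rw [← q.support_eq_cons]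



/-- Let `p` be a cycle of odd length colored with colors `0, …, n-1` (`n ≥ 3` odd) so that every
edge of the cycle joins colors `i` and `i+1 (mod n)`. Then for each `i`, the number of edges of
the cycle between the color classes `i` and `i+1` is odd. -/
theorem stmt15 {V : Type*} (n : ℕ) (hn : 3 ≤ n) (hnodd : Odd n) [NeZero n]
    (G : SimpleGraph V) (v : V) (p : G.Walk v v) (hp : p.IsCycle) (hpodd : Odd p.length)
    (c : V → Fin n)
    (hc : ∀ a b : V, s(a, b) ∈ p.edges → (c b = c a + 1 ∨ c a = c b + 1))
    (i : Fin n) :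
    Odd {e : Sym2 V | e ∈ p.edges ∧
      ∃ a b : V, e = s(a, b) ∧ c a = i ∧ c b = i + 1}.ncard := by
  classical
  set P : Sym2 V → Prop := fun e => ∃ a b : V, e = s(a, b) ∧ c a = i ∧ c b = i + 1 with hPdef
  -- step 1 : ncard = countP over edges
  have hSet : {e : Sym2 V | e ∈ p.edges ∧ P e}
      = ↑((p.edges.filter (fun e => decide (P e))).toFinset) := by
    ext e
    simp [List.mem_filter]
  have hncard : {e : Sym2 V | e ∈ p.edges ∧ P e}.ncard
      = p.edges.countP (fun e => decide (P e)) := by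
    rw [hSet, Set.ncard_coe_finset,
      List.toFinset_card_of_nodup (hp.edges_nodup.filter _),
      ← List.countP_eq_length_filter]
  -- step 2 : pointwise predicate translation
  have hpt : ∀ a b : V, P s(a, b) ↔ Bnd i (c a, c b) := by
    intro a b
    constructor
    · rintro ⟨x, y, he, h1, h2⟩
      rcases Sym2.eq_iff.mp he with ⟨rfl, rfl⟩ | ⟨rfl, rfl⟩
      · exact Or.inl ⟨h1, h2⟩
      · exact Or.inr ⟨h1, h2⟩
    · rintro (⟨h1, h2⟩ | ⟨h1, h2⟩)
      · exact ⟨a, b, rfl, h1, h2⟩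
      · exact ⟨b, a, Sym2.eq_swap, h1, h2⟩
  -- the color list
  set l : List (Fin n) := p.support.map c with hl
  have hz : l.zip l.tail = (p.support.zip p.support.tail).map (Prod.map c c) := by
    rw [hl, ← List.map_tail, List.zip_map]
  have hcount : p.edges.countP (fun e => decide (P e)) = cnt i (l.zip l.tail) := by
    rw [edges_eq_zip p, List.countP_map, hz, cnt, List.countP_map]
    apply List.countP_congr
    intro q _
    simp only [Function.comp_apply, decide_eq_true_eq]
    exact hpt q.1 q.2
  rw [hncard, hcount]
  -- hypotheses for steps_main
  have hne : l ≠ [] := by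
    rw [hl]
    simp [p.support_ne_nil]
  have hedge : ∀ q ∈ p.support.zip p.support.tail, s(q.1, q.2) ∈ p.edges := by
    intro q hq
    rw [edges_eq_zip p]
    exact List.mem_map_of_mem hq
  have hstep : ∀ q ∈ l.zip l.tail, q.2 = q.1 + 1 ∨ q.1 = q.2 + 1 := by
    intro q hq
    rw [hz] at hq
    obtain ⟨r, hr, rfl⟩ := List.mem_map.mp hq
    exact hc r.1 r.2 (hedge r hr)
  have hcl : l.head hne = l.getLast hne := by
    have h1 : (p.support.map c).head (by simp [p.support_ne_nil])
        = (p.support.map c).getLast (by simp [p.support_ne_nil]) := by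
      rw [List.head_map, List.getLast_map, p.head_support, p.getLast_support]
    exact h1
  have hbal : ∀ x : Fin n, (l.zip l.tail).countP (fun q => decide (q.1 = x))
      = (l.zip l.tail).countP (fun q => decide (q.2 = x)) := by
    intro x
    have h1 : (l.zip l.tail).countP (fun q => decide (q.1 = x))
        = l.dropLast.countP (fun y => decide (y = x)) := by
      rw [← map_fst_zip_tail l, List.countP_map]
      rfl
    have h2 : l.tail.countP (fun y => decide (y = x))
        = (l.zip l.tail).countP (fun q => decide (q.2 = x)) := by
      conv_lhs => rw [← map_snd_zip_tail l]
      rw [List.countP_map]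
      rfl
    rw [h1, ← h2]
    exact closed_bal _ l hne hcl
  have hlen : (l.zip l.tail).length = p.length := by
    rw [List.length_zip, List.length_tail, hl, List.length_map, p.length_support]
    omega
  exact steps_main hn hnodd (l.zip l.tail) hstep hbal (hlen ▸ hpodd) i
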